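/- For every positive integer r there exists an integer a ≡ 3 (mod 4) such that for every odd prime p with p ≡ a (mod 4r), r is a quadratic residue modulo p, i.e., the Legendre symbol (r/p) = +1. -/

import Mathlib

open ZMod

private lemma legendre_congr (p : ℕ) [Fact p.Prime] {a b : ℤ}
    (h : (a : ZMod p) = (b : ZMod p)) : legendreSym p a = legendreSym p b := by
  simp only [legendreSym, h]

/-- If `p ≡ -1 (mod 4q)` for odd primes `p, q`, then `(q/p) = 1`. -/
private lemma legendre_odd_prime (p q : ℕ) [Fact p.Prime] [Fact q.Prime]
    (hp2 : p ≠ 2) (hq2 : q ≠ 2) (h4 : p % 4 = 3) (hpq : ((p : ℤ) : ZMod q) = -1) :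
    legendreSym p q = 1 := by
  have hq1 : legendreSym q (p : ℤ) = legendreSym q (-1 : ℤ) := legendre_congr q (by simpa using hpq)
  have hqneg : legendreSym q (-1) = χ₄ q := legendreSym.at_neg_one hq2
  have hqodd : q % 2 = 1 := (Nat.Prime.mod_two_eq_one_iff_ne_two Fact.out).mpr hq2
  have hcast : legendreSym q (p : ℤ) = legendreSym q (p : ℕ) := by norm_cast
  have hcast2 : legendreSym p (q : ℤ) = legendreSym p (q : ℕ) := by norm_cast
  rcases (by omega : q % 4 = 1 ∨ q % 4 = 3) with hq4 | hq4
  · have hrec : legendreSym p (q : ℕ) = legendreSym q (p : ℕ) :=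
      legendreSym.quadratic_reciprocity_one_mod_four hq4 hp2
    have : χ₄ (q : ℕ) = 1 := χ₄_nat_one_mod_four hq4
    rw [← hcast2, hcast2, hrec, ← hcast, hq1, hqneg, this]
  · have hrec : legendreSym q (p : ℕ) = -legendreSym p (q : ℕ) :=
      legendreSym.quadratic_reciprocity_three_mod_four h4 hq4
    have : χ₄ (q : ℕ) = -1 := χ₄_nat_three_mod_four hq4
    have h1 : -legendreSym p (q : ℕ) = -1 := by
      rw [← hrec, ← hcast, hq1, hqneg, this]
    rw [← hcast2] at h1 ⊢
    linarith

/-- If `p ≡ -1 (mod 4r)` then `(r/p) = 1`. -/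
private lemma legendre_aux (p : ℕ) [Fact p.Prime] (hp2 : p ≠ 2) :
    ∀ r : ℕ, 0 < r → ((4 * r : ℕ) : ℤ) ∣ (p : ℤ) + 1 → legendreSym p (r : ℤ) = 1 := by
  have hmod4 : ∀ r : ℕ, 0 < r → ((4 * r : ℕ) : ℤ) ∣ (p : ℤ) + 1 → p % 4 = 3 := by
    intro r hr hdvd
    have h4 : (4 : ℤ) ∣ (p : ℤ) + 1 := dvd_trans (by exact_mod_cast Dvd.intro r rfl) hdvd
    have hodd : p % 2 = 1 := (Nat.Prime.mod_two_eq_one_iff_ne_two Fact.out).mpr hp2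
    omega
  intro r
  induction r using Nat.recOnMul with
  | zero => intro h; omega
  | one => intro _ _; simpa using legendreSym.at_one (p := p)
  | prime q hq =>
    intro _ hdvd
    haveI : Fact q.Prime := ⟨hq⟩
    rcases eq_or_ne q 2 with rfl | hq2
    · -- q = 2 : p ≡ -1 mod 8
      have h8 : (8 : ℤ) ∣ (p : ℤ) + 1 := by exact_mod_cast hdvd
      have hodd : p % 2 = 1 := (Nat.Prime.mod_two_eq_one_iff_ne_two Fact.out).mpr hp2
      have hp8 : p % 8 = 7 := by omega
      have := legendreSym.at_two (p := p) hp2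
      rw [show ((2 : ℕ) : ℤ) = 2 by norm_num, this, χ₈_nat_mod_eight, hp8]
      decide
    · have h4 : p % 4 = 3 := hmod4 q hq.pos hdvd
      have hq0 : q % 4 = 1 ∨ q % 4 = 3 := by
        have := (Nat.Prime.mod_two_eq_one_iff_ne_two hq).mpr hq2
        omega
      have hpq : ((p : ℤ) : ZMod q) = -1 := by
        have hqdvd : ((q : ℕ) : ℤ) ∣ (p : ℤ) + 1 :=
          dvd_trans (by exact_mod_cast Dvd.intro_left 4 rfl) hdvd
        have : (((p : ℤ) + 1 : ℤ) : ZMod q) = 0 := by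
          exact_mod_cast (ZMod.intCast_zmod_eq_zero_iff_dvd _ q).mpr hqdvd
        push_cast at this ⊢
        linear_combination this
      exact legendre_odd_prime p q hp2 hq2 h4 hpq
  | mul a b ha hb =>
    intro hab hdvd
    have ha0 : 0 < a := Nat.pos_of_mul_pos_left (by rwa [mul_comm] at hab)
    have hb0 : 0 < b := Nat.pos_of_mul_pos_left hab
    have hda : ((4 * a : ℕ) : ℤ) ∣ (p : ℤ) + 1 :=
      dvd_trans (show ((4 * a : ℕ) : ℤ) ∣ ((4 * (a * b) : ℕ) : ℤ) from ⟨b, by push_cast; ring⟩) hdvd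
    have hdb : ((4 * b : ℕ) : ℤ) ∣ (p : ℤ) + 1 :=
      dvd_trans (show ((4 * b : ℕ) : ℤ) ∣ ((4 * (a * b) : ℕ) : ℤ) from ⟨a, by push_cast; ring⟩) hdvd
    have h : ((a * b : ℕ) : ℤ) = (a : ℤ) * (b : ℤ) := by push_cast; ring
    rw [h, legendreSym.mul, ha ha0 hda, hb hb0 hdb, one_mul]

theorem stmt_11 (r : ℕ) (hr : 0 < r) :
    ∃ a : ℤ, a % 4 = 3 ∧ ∀ p : ℕ, (hp : p.Prime) → p ≠ 2 →
      (p : ℤ) ≡ a [ZMOD (4 * r)] → @legendreSym p ⟨hp⟩ r = 1 := by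
  refine ⟨4 * r - 1, by omega, fun p hp hp2 hmod => ?_⟩
  haveI : Fact p.Prime := ⟨hp⟩
  have hdvd : ((4 * r : ℕ) : ℤ) ∣ (p : ℤ) + 1 := by
    have h1 : (4 * (r : ℤ)) ∣ (4 * (r : ℤ) - 1) - (p : ℤ) := hmod.dvd
    have h2 : ((p : ℤ) + 1) = 4 * (r : ℤ) - ((4 * (r : ℤ) - 1) - (p : ℤ)) := by ring
    push_cast
    rw [h2]
    exact dvd_sub ⟨1, by ring⟩ h1
  exact legendre_aux p hp2 r hr hdvd
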